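/- (Theorem 1, case ᾱ = ∞.) Fix an integer k ≥ 2. Call t', t'' ∈ T(N,k) confusable if there exists a real c ≥ 1 such that c·t' = t'' or c·t'' = t' as vectors in ℝ^k, and call S ⊆ T(N,k) a zero-error code if no two distinct elements of S are confusable. Let M(N) be the maximum cardinality of a zero-error code in T(N,k). Then lim_{N→∞} M(N) / binomial(N,k) = ζ(k)^{-1}, where ζ(k) = ∑_{n=1}^∞ n^{-k}. Moreover C(N,k) is an optimal zero-error code, i.e., M(N) = |C(N,k)| for every N. -/

import Mathlib

open Filter

/-- The space of `k`-event signals: `k` inter-event intervals, each at least 1,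
summing to at most `N`. -/
def SignalSpace (N k : ℕ) : Finset (Fin k → ℕ) :=
  (Fintype.piFinset fun _ => Finset.Icc 1 N).filter fun t => ∑ i, t i ≤ N

/-- The signals in `SignalSpace N k` whose coordinates are coprime (gcd 1). -/
def CoprimeCode (N k : ℕ) : Finset (Fin k → ℕ) :=
  (SignalSpace N k).filter fun t => Finset.univ.gcd t = 1

/-- Confusability for an unbounded time-dilation factor: one signal is a real
multiple (with factor `≥ 1`) of the other. -/
def Confusable {k : ℕ} (u v : Fin k → ℕ) : Prop :=
  ∃ c : ℝ, 1 ≤ c ∧ ((∀ i, c * (u i : ℝ) = (v i : ℝ)) ∨ (∀ i, c * (v i : ℝ) = (u i : ℝ)))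

/-- A zero-error code inside `SignalSpace N k`: no two distinct codewords are confusable. -/
def IsZeroErrorCode (N k : ℕ) (S : Finset (Fin k → ℕ)) : Prop :=
  S ⊆ SignalSpace N k ∧ ∀ u ∈ S, ∀ v ∈ S, u ≠ v → ¬ Confusable u v


open Finset ArithmeticFunction Topology
open scoped ArithmeticFunction.Moebius ArithmeticFunction.zeta

lemma mem_signalSpace' {N k : ℕ} {t : Fin k → ℕ} :
    t ∈ SignalSpace N k ↔ (∀ i, 1 ≤ t i ∧ t i ≤ N) ∧ ∑ i, t i ≤ N := by
  simp [SignalSpace, Fintype.mem_piFinset, and_comm]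

/-- extension of a tuple to ℕ by 1's -/
def tex {k : ℕ} (t : Fin k → ℕ) (i : ℕ) : ℕ := if h : i < k then t ⟨i, h⟩ else 1

/-- partial sums -/
def psum {k : ℕ} (t : Fin k → ℕ) (j : ℕ) : ℕ := ∑ i ∈ Finset.range j, tex t i

lemma psum_succ {k : ℕ} (t : Fin k → ℕ) (j : ℕ) : psum t (j+1) = psum t j + tex t j :=
  Finset.sum_range_succ _ _

lemma one_le_tex {k : ℕ} {t : Fin k → ℕ} (ht : ∀ i, 1 ≤ t i) (i : ℕ) : 1 ≤ tex t i := by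
  unfold tex; split <;> simp [ht _]

lemma psum_strictMono {k : ℕ} {t : Fin k → ℕ} (ht : ∀ i, 1 ≤ t i) : StrictMono (psum t) := by
  apply strictMono_nat_of_lt_succ
  intro n
  have := one_le_tex ht n
  rw [psum_succ]; omega

lemma le_psum {k : ℕ} {t : Fin k → ℕ} (ht : ∀ i, 1 ≤ t i) (j : ℕ) : j ≤ psum t j := by
  induction j with
  | zero => simp
  | succ n ih => have := one_le_tex ht n; rw [psum_succ]; omega

lemma psum_le {N k : ℕ} {t : Fin k → ℕ} (ht : t ∈ SignalSpace N k) {j : ℕ} (hj : j ≤ k) :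
    psum t j ≤ N := by
  obtain ⟨h1, h2⟩ := mem_signalSpace'.mp ht
  calc psum t j ≤ psum t k := (psum_strictMono fun i => (h1 i).1).monotone hj
  _ = ∑ i, t i := by
      rw [psum, Fin.sum_univ_eq_sum_range (tex t) k |>.symm]
      exact Finset.sum_congr rfl fun i _ => by simp [tex, i.isLt]
  _ ≤ N := h2

/-- forward map to subsets -/
def fwd {k : ℕ} (t : Fin k → ℕ) : Finset ℕ :=
  Finset.image (fun i : Fin k => psum t (i+1) - 1) Finset.univ

lemma fwd_strictMono {k : ℕ} {t : Fin k → ℕ} (ht : ∀ i, 1 ≤ t i) :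
    StrictMono (fun i : Fin k => psum t (i+1) - 1) := by
  intro a b hab
  show psum t ((a:ℕ)+1) - 1 < psum t ((b:ℕ)+1) - 1
  have h1 := psum_strictMono ht (show (a:ℕ)+1 < (b:ℕ)+1 by exact_mod_cast Nat.succ_lt_succ hab)
  have h2 := le_psum ht ((a:ℕ)+1)
  omega

lemma fwd_mem_powersetCard {N k : ℕ} {t : Fin k → ℕ} (ht : t ∈ SignalSpace N k) :
    fwd t ∈ (Finset.range N).powersetCard k := by
  obtain ⟨h1, _⟩ := mem_signalSpace'.mp ht
  rw [Finset.mem_powersetCard]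
  constructor
  · intro x hx
    simp only [fwd, Finset.mem_image, Finset.mem_univ, true_and] at hx
    obtain ⟨i, rfl⟩ := hx
    have hle : psum t (i+1) ≤ N := psum_le ht (by omega)
    have hge := le_psum (fun i => (h1 i).1) ((i:ℕ)+1)
    simp only [Finset.mem_range]; omega
  · rw [fwd, Finset.card_image_of_injective _ (fwd_strictMono fun i => (h1 i).1).injective,
      Finset.card_univ, Fintype.card_fin]

/-- cumulative function from an order embedding -/
def bwdf {k : ℕ} (hk : 1 ≤ k) (e : Fin k ↪o ℕ) : ℕ → ℕ
  | 0 => 0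
  | (j+1) => e ⟨min j (k-1), by omega⟩ + 1

/-- backward map from order embedding to tuples -/
def bwd {k : ℕ} (hk : 1 ≤ k) (e : Fin k ↪o ℕ) (i : Fin k) : ℕ :=
  bwdf hk e ((i:ℕ)+1) - bwdf hk e (i:ℕ)

lemma bwdf_mono {k : ℕ} (hk : 1 ≤ k) (e : Fin k ↪o ℕ) : Monotone (bwdf hk e) := by
  apply monotone_nat_of_le_succ
  intro n
  match n with
  | 0 => exact Nat.zero_le _
  | (j+1) =>
    simp only [bwdf]
    have : min j (k-1) ≤ min (j+1) (k-1) := by omega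
    exact Nat.succ_le_succ (e.monotone (by exact this))

lemma bwdf_lt {k : ℕ} (hk : 1 ≤ k) (e : Fin k ↪o ℕ) (i : Fin k) :
    bwdf hk e (i:ℕ) < bwdf hk e ((i:ℕ)+1) := by
  match hi : (i : ℕ), i.isLt with
  | 0, _ => simp [bwdf]
  | (m+1), hm =>
    simp only [bwdf]
    have h1 : min m (k-1) < min (m+1) (k-1) := by omega
    exact Nat.succ_lt_succ (e.strictMono (by exact h1))

lemma sum_bwd {k : ℕ} (hk : 1 ≤ k) (e : Fin k ↪o ℕ) :
    ∑ i, bwd hk e i = e ⟨k-1, by omega⟩ + 1 := by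
  have : ∑ i, bwd hk e i = ∑ j ∈ Finset.range k, (bwdf hk e (j+1) - bwdf hk e j) := by
    rw [← Fin.sum_univ_eq_sum_range (fun j => bwdf hk e (j+1) - bwdf hk e j) k]; rfl
  rw [this, Finset.sum_range_tsub (bwdf_mono hk e)]
  match k, hk with
  | (m+1), _ => simp [bwdf]

lemma bwd_mem_signalSpace' {N k : ℕ} (hk : 1 ≤ k) {s : Finset ℕ}
    (hs : s ∈ (Finset.range N).powersetCard k) :
    bwd hk (s.orderEmbOfFin (Finset.mem_powersetCard.mp hs).2) ∈ SignalSpace N k := by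
  obtain ⟨hsub, hcard⟩ := Finset.mem_powersetCard.mp hs
  set e := s.orderEmbOfFin hcard with he
  have heN : ∀ i : Fin k, e i < N := fun i =>
    Finset.mem_range.mp (hsub (Finset.orderEmbOfFin_mem s hcard i))
  rw [mem_signalSpace']
  refine ⟨fun i => ⟨?_, ?_⟩, ?_⟩
  · have := bwdf_lt hk e i
    unfold bwd; omega
  · have h1 : bwd hk e i ≤ bwdf hk e ((i:ℕ)+1) := Nat.sub_le _ _
    have h2 : bwdf hk e ((i:ℕ)+1) ≤ N := by
      simp only [bwdf]; exact Nat.succ_le_of_lt (heN _)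
    omega
  · rw [sum_bwd hk e]
    exact Nat.succ_le_of_lt (heN _)

lemma left_inv_aux {N k : ℕ} (hk : 1 ≤ k) {t : Fin k → ℕ} (ht : t ∈ SignalSpace N k) :
    bwd hk ((fwd t).orderEmbOfFin
      (Finset.mem_powersetCard.mp (fwd_mem_powersetCard ht)).2) = t := by
  obtain ⟨h1, _⟩ := mem_signalSpace'.mp ht
  have hpos : ∀ i, 1 ≤ t i := fun i => (h1 i).1
  set hcard := (Finset.mem_powersetCard.mp (fwd_mem_powersetCard ht)).2
  have he : (fun i : Fin k => psum t ((i:ℕ)+1) - 1) = ⇑((fwd t).orderEmbOfFin hcard) :=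
    Finset.orderEmbOfFin_unique hcard
      (fun i => Finset.mem_image.mpr ⟨i, Finset.mem_univ _, rfl⟩) (fwd_strictMono hpos)
  set e := (fwd t).orderEmbOfFin hcard with hedef
  have heval : ∀ i : Fin k, e i = psum t ((i:ℕ)+1) - 1 := fun i => (congrFun he i).symm
  have hpsum_pos : ∀ j, 1 ≤ psum t (j+1) := fun j => le_trans (by omega) (le_psum hpos (j+1))
  funext i
  show bwdf hk e ((i:ℕ)+1) - bwdf hk e (i:ℕ) = t i
  have hb1 : bwdf hk e ((i:ℕ)+1) = psum t ((i:ℕ)+1) := by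
    show e ⟨min (i:ℕ) (k-1), _⟩ + 1 = _
    have hmin : min (i:ℕ) (k-1) = (i:ℕ) := by have := i.isLt; omega
    rw [heval]
    simp only [hmin]
    have := hpsum_pos (i:ℕ)
    omega
  have hb0 : bwdf hk e (i:ℕ) = psum t (i:ℕ) := by
    match hi : (i:ℕ), i.isLt with
    | 0, _ => simp [bwdf, psum]
    | (m+1), hm =>
      show e ⟨min m (k-1), _⟩ + 1 = _
      have hmin : min m (k-1) = m := by omega
      have heval' : e ⟨min m (k-1), by omega⟩ = psum t (min m (k-1) + 1) - 1 :=
        heval ⟨min m (k-1), by omega⟩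
      rw [heval']
      simp only [hmin]
      have := hpsum_pos m
      omega
  rw [hb1, hb0, psum_succ]
  have : tex t (i:ℕ) = t i := by simp [tex, i.isLt]
  omega

lemma right_inv_aux {N k : ℕ} (hk : 1 ≤ k) {s : Finset ℕ}
    (hs : s ∈ (Finset.range N).powersetCard k) :
    fwd (bwd hk (s.orderEmbOfFin (Finset.mem_powersetCard.mp hs).2)) = s := by
  obtain ⟨hsub, hcard⟩ := Finset.mem_powersetCard.mp hs
  set e := s.orderEmbOfFin (Finset.mem_powersetCard.mp hs).2 with hedef
  set t := bwd hk e with htdef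
  have hval : ∀ i : Fin k, psum t ((i:ℕ)+1) - 1 = e i := by
    intro i
    have hsum : psum t ((i:ℕ)+1) = bwdf hk e ((i:ℕ)+1) := by
      rw [psum]
      have : ∀ j ∈ Finset.range ((i:ℕ)+1), tex t j = bwdf hk e (j+1) - bwdf hk e j := by
        intro j hj
        have hjk : j < k := lt_of_lt_of_le (Finset.mem_range.mp hj) i.isLt
        simp [tex, hjk, htdef, bwd]
      rw [Finset.sum_congr rfl this, Finset.sum_range_tsub (bwdf_mono hk e)]
      rfl
    rw [hsum]
    show bwdf hk e ((i:ℕ)+1) - 1 = e i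
    have hmin : min (i:ℕ) (k-1) = (i:ℕ) := by have := i.isLt; omega
    show e ⟨min (i:ℕ) (k-1), _⟩ + 1 - 1 = e i
    simp only [hmin, Nat.add_sub_cancel]
  have hsubset : fwd t ⊆ s := by
    intro x hx
    simp only [fwd, Finset.mem_image, Finset.mem_univ, true_and] at hx
    obtain ⟨i, rfl⟩ := hx
    rw [hval i]
    exact Finset.orderEmbOfFin_mem s _ i
  apply Finset.eq_of_subset_of_card_le hsubset
  have : (fwd t).card = k := (Finset.mem_powersetCard.mp
    (fwd_mem_powersetCard (bwd_mem_signalSpace' hk hs))).2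
  rw [this, hcard]

lemma card_signalSpace (N k : ℕ) (hk : 1 ≤ k) : (SignalSpace N k).card = N.choose k := by
  have := Finset.card_bij' (s := SignalSpace N k) (t := (Finset.range N).powersetCard k)
    (fun t _ => fwd t)
    (fun s hs => bwd hk (s.orderEmbOfFin (Finset.mem_powersetCard.mp hs).2))
    (fun t ht => fwd_mem_powersetCard ht)
    (fun s hs => bwd_mem_signalSpace' hk hs)
    (fun t ht => left_inv_aux hk ht)
    (fun s hs => right_inv_aux hk hs)
  rw [this, Finset.card_powersetCard, Finset.card_range]

lemma sum_mu (n : ℕ) : ∑ d ∈ n.divisors, μ d = if n = 1 then 1 else 0 := by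
  calc ∑ d ∈ n.divisors, μ d = (μ * ζ : ArithmeticFunction ℤ) n :=
        (ArithmeticFunction.coe_mul_zeta_apply).symm
    _ = (1 : ArithmeticFunction ℤ) n := by rw [ArithmeticFunction.moebius_mul_coe_zeta]
    _ = _ := ArithmeticFunction.one_apply

lemma card_dvd_filter (N k d : ℕ) (hd : 1 ≤ d) :
    ((SignalSpace N k).filter (fun t => d ∣ Finset.univ.gcd t)).card
      = (SignalSpace (N / d) k).card := by
  have hd0 : 0 < d := hd
  symm
  apply Finset.card_bij' (fun u _ => fun i => d * u i) (fun t _ => fun i => t i / d)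
  · intro u hu
    obtain ⟨h1, h2⟩ := mem_signalSpace'.mp hu
    rw [Finset.mem_filter]
    refine ⟨mem_signalSpace'.mpr ⟨fun i => ⟨?_, ?_⟩, ?_⟩, ?_⟩
    · calc 1 = 1 * 1 := rfl
        _ ≤ d * u i := Nat.mul_le_mul hd (h1 i).1
    · calc d * u i ≤ d * ∑ j, u j :=
            Nat.mul_le_mul_left d (Finset.single_le_sum (fun j _ => Nat.zero_le _)
              (Finset.mem_univ i))
        _ ≤ d * (N / d) := Nat.mul_le_mul_left d h2
        _ ≤ N := by rw [Nat.mul_comm]; exact Nat.div_mul_le_self N d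
    · calc ∑ i, d * u i = d * ∑ i, u i := by rw [Finset.mul_sum]
        _ ≤ d * (N / d) := Nat.mul_le_mul_left d h2
        _ ≤ N := by rw [Nat.mul_comm]; exact Nat.div_mul_le_self N d
    · exact Finset.dvd_gcd fun i _ => dvd_mul_right d (u i)
  · intro t ht
    obtain ⟨hts, htd⟩ := Finset.mem_filter.mp ht
    obtain ⟨h1, h2⟩ := mem_signalSpace'.mp hts
    have hdvd : ∀ i, d ∣ t i := fun i => htd.trans (Finset.gcd_dvd (Finset.mem_univ i))
    have hsum : (∑ i, t i / d) * d ≤ N := by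
      calc (∑ i, t i / d) * d = ∑ i, (t i / d * d) := by rw [Finset.sum_mul]
        _ = ∑ i, t i := Finset.sum_congr rfl fun i _ => Nat.div_mul_cancel (hdvd i)
        _ ≤ N := h2
    have hsumdiv : ∑ i, t i / d ≤ N / d := (Nat.le_div_iff_mul_le hd0).mpr hsum
    refine mem_signalSpace'.mpr ⟨fun i => ⟨?_, ?_⟩, hsumdiv⟩
    · exact (Nat.one_le_div_iff hd0).mpr (Nat.le_of_dvd (h1 i).1 (hdvd i))
    · calc t i / d ≤ ∑ j, t j / d :=
          Finset.single_le_sum (f := fun j => t j / d) (fun j _ => Nat.zero_le _)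
            (Finset.mem_univ i)
        _ ≤ N / d := hsumdiv
  · intro u _; funext i; exact Nat.mul_div_cancel_left _ hd0
  · intro t ht
    obtain ⟨_, htd⟩ := Finset.mem_filter.mp ht
    have hdvd : ∀ i, d ∣ t i := fun i => htd.trans (Finset.gcd_dvd (Finset.mem_univ i))
    funext i; exact Nat.mul_div_cancel' (hdvd i)

lemma gcd_bounds {N k : ℕ} (hk : 1 ≤ k) {t : Fin k → ℕ} (ht : t ∈ SignalSpace N k) :
    1 ≤ Finset.univ.gcd t ∧ Finset.univ.gcd t ≤ N := by
  obtain ⟨h1, h2⟩ := mem_signalSpace'.mp ht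
  have i0 : Fin k := ⟨0, hk⟩
  have hdvd : Finset.univ.gcd t ∣ t i0 := Finset.gcd_dvd (Finset.mem_univ i0)
  have ht0 : 0 < t i0 := (h1 i0).1
  have hle : Finset.univ.gcd t ≤ t i0 := Nat.le_of_dvd ht0 hdvd
  have hne : Finset.univ.gcd t ≠ 0 := by
    intro h
    rw [h] at hdvd
    exact absurd (Nat.eq_zero_of_zero_dvd hdvd) (by omega)
  exact ⟨by omega, le_trans hle (h1 i0).2⟩

lemma divisors_gcd_eq {N g : ℕ} (hg1 : 1 ≤ g) (hgN : g ≤ N) :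
    g.divisors = (Finset.Icc 1 N).filter (· ∣ g) := by
  ext a
  simp only [Nat.mem_divisors, Finset.mem_filter, Finset.mem_Icc]
  constructor
  · rintro ⟨hdvd, -⟩
    have ha : a ≠ 0 := by rintro rfl; exact absurd (Nat.eq_zero_of_zero_dvd hdvd) (by omega)
    exact ⟨⟨by omega, le_trans (Nat.le_of_dvd (by omega) hdvd) hgN⟩, hdvd⟩
  · rintro ⟨-, hdvd⟩
    exact ⟨hdvd, by omega⟩

lemma coprimeCode_card (N k : ℕ) (hk : 1 ≤ k) :
    ((CoprimeCode N k).card : ℤ)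
      = ∑ d ∈ Finset.Icc 1 N, μ d * ((N / d).choose k : ℤ) := by
  have key : ∀ d ∈ Finset.Icc 1 N,
      (((SignalSpace N k).filter (fun t => d ∣ Finset.univ.gcd t)).card : ℤ)
        = ((N / d).choose k : ℤ) := by
    intro d hd
    rw [card_dvd_filter N k d (Finset.mem_Icc.mp hd).1]
    norm_cast
    exact card_signalSpace (N / d) k hk
  calc ((CoprimeCode N k).card : ℤ)
      = ∑ t ∈ SignalSpace N k, if Finset.univ.gcd t = 1 then (1:ℤ) else 0 := by
        rw [CoprimeCode, Finset.card_filter]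
        push_cast
        rfl
    _ = ∑ t ∈ SignalSpace N k, ∑ d ∈ (Finset.univ.gcd t).divisors, μ d :=
        Finset.sum_congr rfl fun t _ => (sum_mu _).symm
    _ = ∑ t ∈ SignalSpace N k, ∑ d ∈ Finset.Icc 1 N, if d ∣ Finset.univ.gcd t then μ d else 0 := by
        refine Finset.sum_congr rfl fun t ht => ?_
        obtain ⟨hg1, hgN⟩ := gcd_bounds hk ht
        rw [divisors_gcd_eq hg1 hgN, Finset.sum_filter]
    _ = ∑ d ∈ Finset.Icc 1 N, ∑ t ∈ SignalSpace N k,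
          if d ∣ Finset.univ.gcd t then μ d else 0 := Finset.sum_comm
    _ = ∑ d ∈ Finset.Icc 1 N, μ d * ((N / d).choose k : ℤ) := by
        refine Finset.sum_congr rfl fun d hd => ?_
        rw [← Finset.sum_filter, Finset.sum_const, ← key d hd]
        push_cast
        ring

lemma gcd_bounds' {N k : ℕ} (hk : 1 ≤ k) {t : Fin k → ℕ} (ht : t ∈ SignalSpace N k) :
    1 ≤ Finset.univ.gcd t ∧ Finset.univ.gcd t ≤ N := by
  obtain ⟨h1, h2⟩ := mem_signalSpace'.mp ht
  have i0 : Fin k := ⟨0, hk⟩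
  have hdvd : Finset.univ.gcd t ∣ t i0 := Finset.gcd_dvd (Finset.mem_univ i0)
  have ht0 : 0 < t i0 := (h1 i0).1
  have hle : Finset.univ.gcd t ≤ t i0 := Nat.le_of_dvd ht0 hdvd
  have hne : Finset.univ.gcd t ≠ 0 := by
    intro h
    rw [h] at hdvd
    exact absurd (Nat.eq_zero_of_zero_dvd hdvd) (by omega)
  exact ⟨by omega, le_trans hle (h1 i0).2⟩

/-- two primitive proportional vectors are equal -/
lemma eq_of_cross {k : ℕ} {u v : Fin k → ℕ}
    (hu : Finset.univ.gcd u = 1) (hv : Finset.univ.gcd v = 1)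
    (h : ∀ i j, u i * v j = u j * v i) : u = v := by
  funext i
  calc u i = u i * Finset.univ.gcd v := by rw [hv, Nat.mul_one]
    _ = Finset.univ.gcd (fun j => u i * v j) := by
        rw [Finset.gcd_mul_left]; simp
    _ = Finset.univ.gcd (fun j => v i * u j) := by
        refine Finset.gcd_congr rfl fun j _ => ?_
        rw [h i j, Nat.mul_comm]
    _ = v i * Finset.univ.gcd u := by rw [Finset.gcd_mul_left]; simp
    _ = v i := by rw [hu, Nat.mul_one]

lemma cross_of_ratio {k : ℕ} {u v : Fin k → ℕ} {c : ℝ}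
    (hc : ∀ i, c * (u i : ℝ) = (v i : ℝ)) (i j : Fin k) : u i * v j = u j * v i := by
  have : ((u i * v j : ℕ) : ℝ) = ((u j * v i : ℕ) : ℝ) := by
    push_cast
    rw [← hc j, ← hc i]
    ring
  exact_mod_cast this

lemma coprimeCode_zero_error (N k : ℕ) : IsZeroErrorCode N k (CoprimeCode N k) := by
  refine ⟨Finset.filter_subset _ _, ?_⟩
  rintro u hu v hv hne ⟨c, _, hor⟩
  have hu1 : Finset.univ.gcd u = 1 := (Finset.mem_filter.mp hu).2
  have hv1 : Finset.univ.gcd v = 1 := (Finset.mem_filter.mp hv).2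
  rcases hor with h | h
  · exact hne (eq_of_cross hu1 hv1 (cross_of_ratio h))
  · exact hne (eq_of_cross hv1 hu1 (cross_of_ratio h)).symm

/-- reduction of a signal by its gcd -/
lemma red_mem {N k : ℕ} (hk : 1 ≤ k) {t : Fin k → ℕ} (ht : t ∈ SignalSpace N k) :
    (fun i => t i / Finset.univ.gcd t) ∈ CoprimeCode N k := by
  obtain ⟨h1, h2⟩ := mem_signalSpace'.mp ht
  obtain ⟨hg1, _⟩ := gcd_bounds' hk ht
  set g := Finset.univ.gcd t with hg
  have hdvd : ∀ i, g ∣ t i := fun i => Finset.gcd_dvd (Finset.mem_univ i)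
  rw [CoprimeCode, Finset.mem_filter]
  constructor
  · refine mem_signalSpace'.mpr ⟨fun i => ⟨?_, ?_⟩, ?_⟩
    · exact (Nat.one_le_div_iff hg1).mpr (Nat.le_of_dvd (h1 i).1 (hdvd i))
    · exact le_trans (Nat.div_le_self _ _) (h1 i).2
    · exact le_trans (Finset.sum_le_sum fun i _ => Nat.div_le_self (t i) g) h2
  · set g' := Finset.univ.gcd (fun i => t i / g) with hg'
    have hgg' : g * g' ∣ g := by
      refine hg ▸ Finset.dvd_gcd fun i _ => ?_
      have h1' : g' ∣ t i / g := Finset.gcd_dvd (Finset.mem_univ i)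
      have := Nat.mul_dvd_mul_left g h1'
      rwa [Nat.mul_div_cancel' (hdvd i)] at this
    have : g' ∣ 1 := by
      rcases hgg' with ⟨e, he⟩
      have hgpos : 0 < g := hg1
      have : g' * e = 1 := by
        have := he
        nlinarith [Nat.le_of_eq he.symm]
      exact ⟨e, this.symm⟩
    exact Nat.dvd_one.mp this

lemma zero_error_card_le {N k : ℕ} (hk : 1 ≤ k) {S : Finset (Fin k → ℕ)}
    (hS : IsZeroErrorCode N k S) : S.card ≤ (CoprimeCode N k).card := by
  obtain ⟨hsub, hnc⟩ := hS
  apply Finset.card_le_card_of_injOn (fun t => fun i => t i / Finset.univ.gcd t)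
    (fun t ht => red_mem hk (hsub ht))
  intro u hu v hv heq
  by_contra hne
  apply hnc u hu v hv hne
  set gu := Finset.univ.gcd u with hgu
  set gv := Finset.univ.gcd v with hgv
  obtain ⟨hgu1, _⟩ := gcd_bounds' hk (hsub hu)
  obtain ⟨hgv1, _⟩ := gcd_bounds' hk (hsub hv)
  have hud : ∀ i, gu * (u i / gu) = u i := fun i =>
    Nat.mul_div_cancel' (Finset.gcd_dvd (Finset.mem_univ i))
  have hvd : ∀ i, gv * (v i / gv) = v i := fun i =>
    Nat.mul_div_cancel' (Finset.gcd_dvd (Finset.mem_univ i))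
  have heq' : ∀ i, u i / gu = v i / gv := fun i => congrFun heq i
  rcases le_total gu gv with hle | hle
  · refine ⟨(gv : ℝ) / gu, ?_, Or.inl fun i => ?_⟩
    · rw [le_div_iff₀ (by positivity)]
      norm_num
      exact_mod_cast hle
    · rw [← hud i, ← hvd i, heq' i]
      have : (gu : ℝ) ≠ 0 := by positivity
      push_cast
      field_simp
  · refine ⟨(gu : ℝ) / gv, ?_, Or.inr fun i => ?_⟩
    · rw [le_div_iff₀ (by positivity)]
      norm_num
      exact_mod_cast hle
    · rw [← hud i, ← hvd i, heq' i]
      have : (gv : ℝ) ≠ 0 := by positivity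
      push_cast
      field_simp

lemma M_eq_coprime_card {k : ℕ} (hk : 1 ≤ k) (M : ℕ → ℕ)
    (hM : ∀ N, IsGreatest {m : ℕ | ∃ S : Finset (Fin k → ℕ),
      IsZeroErrorCode N k S ∧ S.card = m} (M N)) (N : ℕ) :
    M N = (CoprimeCode N k).card := by
  apply le_antisymm
  · obtain ⟨S, hS, hcard⟩ := (hM N).1
    rw [← hcard]
    exact zero_error_card_le hk hS
  · exact (hM N).2 ⟨CoprimeCode N k, coprimeCode_zero_error N k, rfl⟩

/-- `ζ(k) = ∑_{n=1}^∞ n^{-k}`. -/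
noncomputable def zetaSum (k : ℕ) : ℝ := ∑' n : ℕ, (1 : ℝ) / ((n : ℝ) + 1) ^ k

lemma summable_zeta0 {k : ℕ} (hk : 2 ≤ k) : Summable (fun n : ℕ => (1:ℝ) / ((n:ℝ))^k) :=
  Real.summable_one_div_nat_pow.mpr (by omega)

lemma summable_zeta1 {k : ℕ} (hk : 2 ≤ k) : Summable (fun n : ℕ => (1:ℝ) / ((n:ℝ)+1)^k) := by
  have := (summable_nat_add_iff 1).mpr (summable_zeta0 hk)
  apply this.congr
  intro n
  push_cast
  ring

lemma summable_mu1 {k : ℕ} (hk : 2 ≤ k) :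
    Summable (fun n : ℕ => ((μ (n+1) : ℤ):ℝ)/((n:ℝ)+1)^k) := by
  apply Summable.of_norm_bounded (summable_zeta1 hk)
  intro n
  rw [Real.norm_eq_abs, abs_div, abs_of_nonneg (by positivity : (0:ℝ) ≤ ((n:ℝ)+1)^k)]
  have h1 : |((μ (n+1):ℤ):ℝ)| ≤ 1 := by
    have := ArithmeticFunction.abs_moebius_le_one (n := n+1)
    exact_mod_cast this
  gcongr

lemma zeta_term_eq {k : ℕ} (hk : 2 ≤ k) (n : ℕ) :
    LSeries.term (fun m => ((ζ m : ℕ) : ℂ)) (k : ℂ) n = (((1:ℝ)/((n:ℝ))^k : ℝ) : ℂ) := by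
  rw [LSeries.term_def]
  rcases eq_or_ne n 0 with rfl | hn
  · rw [if_pos rfl]
    norm_num [zero_pow (show k ≠ 0 by omega)]
  · rw [if_neg hn, ArithmeticFunction.zeta_apply_ne hn, Complex.cpow_natCast]
    push_cast
    norm_num

lemma mu_term_eq {k : ℕ} (hk : 2 ≤ k) (n : ℕ) :
    LSeries.term (fun m => ((μ m : ℤ) : ℂ)) (k : ℂ) n = ((((μ n : ℤ):ℝ)/((n:ℝ))^k : ℝ) : ℂ) := by
  rw [LSeries.term_def]
  rcases eq_or_ne n 0 with rfl | hn
  · rw [if_pos rfl]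
    norm_num [zero_pow (show k ≠ 0 by omega)]
  · rw [if_neg hn, Complex.cpow_natCast]
    push_cast
    norm_num

lemma zeta_tsum_shift {k : ℕ} (hk : 2 ≤ k) :
    (∑' n : ℕ, (1:ℝ)/((n:ℝ))^k) = zetaSum k := by
  rw [Summable.tsum_eq_zero_add (summable_zeta0 hk)]
  norm_num [zero_pow (show k ≠ 0 by omega)]
  rw [zetaSum]
  apply tsum_congr
  intro n
  push_cast
  ring

lemma mu_tsum_shift {k : ℕ} (hk : 2 ≤ k) :
    (∑' n : ℕ, ((μ n : ℤ):ℝ)/((n:ℝ))^k) = ∑' n : ℕ, ((μ (n+1) : ℤ):ℝ)/((n:ℝ)+1)^k := by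
  have hs : Summable (fun n : ℕ => ((μ n : ℤ):ℝ)/((n:ℝ))^k) := by
    apply Summable.of_norm_bounded (summable_zeta0 hk)
    intro n
    rw [Real.norm_eq_abs, abs_div, abs_of_nonneg (by positivity : (0:ℝ) ≤ ((n:ℝ))^k)]
    have h1 : |((μ n:ℤ):ℝ)| ≤ 1 := by
      have := ArithmeticFunction.abs_moebius_le_one (n := n)
      exact_mod_cast this
    gcongr
  rw [Summable.tsum_eq_zero_add hs]
  simp only [ArithmeticFunction.map_zero]
  norm_num

lemma mu_tsum_eq {k : ℕ} (hk : 2 ≤ k) :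
    (∑' n : ℕ, ((μ (n+1) : ℤ):ℝ)/((n:ℝ)+1)^k) = (zetaSum k)⁻¹ := by
  have hre : 1 < ((k : ℂ)).re := by
    simp only [Complex.natCast_re]
    exact_mod_cast (by omega : 1 < k)
  have hprod := LSeries_zeta_mul_Lseries_moebius hre
  have hz : LSeries (fun m => ((ζ m : ℕ) : ℂ)) (k : ℂ) = ((zetaSum k : ℝ) : ℂ) := by
    rw [LSeries]
    rw [tsum_congr (zeta_term_eq hk), ← Complex.ofReal_tsum, zeta_tsum_shift hk]
  have hm : LSeries (fun m => ((μ m : ℤ) : ℂ)) (k : ℂ)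
      = (((∑' n : ℕ, ((μ (n+1) : ℤ):ℝ)/((n:ℝ)+1)^k) : ℝ) : ℂ) := by
    rw [LSeries]
    rw [tsum_congr (mu_term_eq hk), ← Complex.ofReal_tsum, mu_tsum_shift hk]
  rw [hz, hm, ← Complex.ofReal_mul, ← Complex.ofReal_one, Complex.ofReal_inj] at hprod
  exact (inv_eq_of_mul_eq_one_right hprod).symm

lemma natCast_sub_eq {N k : ℕ} (h : k ≤ N + 1) : (((N+1-k : ℕ)):ℝ) = (N:ℝ)+1-(k:ℝ) := by
  push_cast [Nat.cast_sub h]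
  ring

lemma ratio_upper {k d N : ℕ} (hk : 1 ≤ k) (hN : k ≤ N) :
    (((N/(d+1)).choose k :ℕ):ℝ)/((N.choose k :ℕ):ℝ)
      ≤ ((N:ℝ)/((d:ℝ)+1))^k / ((N:ℝ)+1-(k:ℝ))^k := by
  set m := N/(d+1) with hm
  have hA : (((N+1-k : ℕ)):ℝ) = (N:ℝ)+1-(k:ℝ) := natCast_sub_eq (by omega)
  have hApos : (0:ℝ) < (N:ℝ)+1-(k:ℝ) := by
    rw [← hA]
    exact_mod_cast (by omega : 0 < N+1-k)
  have h1 : ((m.choose k :ℕ):ℝ) ≤ (m:ℝ)^k / (k.factorial:ℝ) := Nat.choose_le_pow_div k m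
  have h2 : ((N:ℝ)+1-(k:ℝ))^k / (k.factorial:ℝ) ≤ ((N.choose k :ℕ):ℝ) := by
    rw [← hA]
    exact Nat.pow_le_choose k N
  have hfac : (0:ℝ) < (k.factorial:ℝ) := by exact_mod_cast k.factorial_pos
  calc (((m.choose k):ℕ):ℝ)/((N.choose k :ℕ):ℝ)
      ≤ ((m:ℝ)^k / (k.factorial:ℝ)) / (((N:ℝ)+1-(k:ℝ))^k / (k.factorial:ℝ)) :=
        div_le_div₀ (by positivity) h1 (by positivity) h2
    _ = (m:ℝ)^k / ((N:ℝ)+1-(k:ℝ))^k := by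
        rw [div_div_div_comm, div_self hfac.ne', div_one]
    _ ≤ ((N:ℝ)/((d:ℝ)+1))^k / ((N:ℝ)+1-(k:ℝ))^k := by
        have hmle : (m:ℝ) ≤ (N:ℝ)/((d:ℝ)+1) := by
          calc (m:ℝ) ≤ (N:ℝ)/(((d+1:ℕ)):ℝ) := Nat.cast_div_le
            _ = (N:ℝ)/((d:ℝ)+1) := by push_cast; ring
        gcongr

lemma ratio_lower {k d N : ℕ} (hk : 1 ≤ k) (hN : k ≤ N) :
    ((((N/(d+1))+1-k : ℕ)):ℝ)^k/(N:ℝ)^k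
      ≤ (((N/(d+1)).choose k :ℕ):ℝ)/((N.choose k :ℕ):ℝ) := by
  set m := N/(d+1) with hm
  have h1 : ((((m+1-k : ℕ)):ℝ))^k / (k.factorial:ℝ) ≤ ((m.choose k :ℕ):ℝ) :=
    Nat.pow_le_choose k m
  have h2 : ((N.choose k :ℕ):ℝ) ≤ (N:ℝ)^k / (k.factorial:ℝ) := Nat.choose_le_pow_div k N
  have hfac : (0:ℝ) < (k.factorial:ℝ) := by exact_mod_cast k.factorial_pos
  have hcpos : (0:ℝ) < ((N.choose k :ℕ):ℝ) := by exact_mod_cast Nat.choose_pos hN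
  have hNpos : (0:ℝ) < (N:ℝ) := by exact_mod_cast (by omega : 0 < N)
  calc ((((m+1-k : ℕ)):ℝ))^k/(N:ℝ)^k
      = ((((m+1-k : ℕ)):ℝ)^k / (k.factorial:ℝ)) / ((N:ℝ)^k / (k.factorial:ℝ)) := by
        rw [div_div_div_comm, div_self hfac.ne', div_one]
    _ ≤ ((m.choose k :ℕ):ℝ)/((N.choose k :ℕ):ℝ) :=
        div_le_div₀ (by positivity) h1 hcpos h2

lemma ratio_tendsto {k : ℕ} (hk : 2 ≤ k) (d : ℕ) :
    Tendsto (fun N : ℕ => (((N/(d+1)).choose k :ℕ):ℝ)/((N.choose k :ℕ):ℝ)) atTop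
      (𝓝 (((1:ℝ)/((d:ℝ)+1))^k)) := by
  have hdpos : (0:ℝ) < (d:ℝ)+1 := by positivity
  apply tendsto_of_tendsto_of_tendsto_of_le_of_le'
    (g := fun N : ℕ => ((1:ℝ)/((d:ℝ)+1) - (k:ℝ)/(N:ℝ))^k)
    (h := fun N : ℕ => ((N:ℝ)/((d:ℝ)+1))^k / ((N:ℝ)+1-(k:ℝ))^k)
  · -- lower tendsto
    have h0 : Tendsto (fun N : ℕ => (k:ℝ)/(N:ℝ)) atTop (𝓝 0) :=
      tendsto_const_div_atTop_nhds_zero_nat (k:ℝ)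
    have := ((tendsto_const_nhds (x := (1:ℝ)/((d:ℝ)+1)) (f := atTop (α := ℕ))).sub h0).pow k
    simpa using this
  · -- upper tendsto
    have h1 : Tendsto (fun N : ℕ => (N:ℝ)+1-(k:ℝ)) atTop atTop := by
      have := tendsto_natCast_atTop_atTop (R := ℝ)
      exact tendsto_atTop_add_const_right atTop (1-(k:ℝ)) (by
        apply this.congr
        intro n
        rfl) |>.congr (fun n => by ring)
    have h2 : Tendsto (fun N : ℕ => ((k:ℝ)-1)/((N:ℝ)+1-(k:ℝ))) atTop (𝓝 0) :=
      Tendsto.div_atTop tendsto_const_nhds h1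
    have h3 : Tendsto (fun N : ℕ =>
        ((1:ℝ)/((d:ℝ)+1)) * (1 + ((k:ℝ)-1)/((N:ℝ)+1-(k:ℝ)))) atTop (𝓝 ((1:ℝ)/((d:ℝ)+1))) := by
      have := (tendsto_const_nhds (x := (1:ℝ)) (f := atTop (α := ℕ))).add h2
      have := (tendsto_const_nhds (x := (1:ℝ)/((d:ℝ)+1)) (f := atTop (α := ℕ))).mul this
      simpa using this
    apply (h3.pow k).congr'
    filter_upwards [eventually_ge_atTop (k+1)] with N hN
    have hkN : (k:ℝ) ≤ (N:ℝ) := by exact_mod_cast (by omega : k ≤ N)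
    have hpos : (0:ℝ) < (N:ℝ)+1-(k:ℝ) := by linarith
    have hbase : (1:ℝ)/((d:ℝ)+1) * (1 + ((k:ℝ)-1)/((N:ℝ)+1-(k:ℝ)))
        = (N:ℝ)/(((d:ℝ)+1)*((N:ℝ)+1-(k:ℝ))) := by
      field_simp
      ring
    rw [hbase, div_pow, div_pow, mul_pow, ← div_div]
  · -- lower ≤ f eventually
    filter_upwards [eventually_ge_atTop ((d+1)*(k+1))] with N hN
    set m := N/(d+1) with hm
    have hdk : 0 < d+1 := by omega
    have hmk : k+1 ≤ m := (Nat.le_div_iff_mul_le hdk).mpr (by nlinarith)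
    have hNk : k ≤ N := by nlinarith
    have hNpos : (0:ℝ) < (N:ℝ) := by exact_mod_cast (by omega : 0 < N)
    have hdm : N < (d+1)*m + (d+1) := by
      have h : (d+1) * m + N % (d+1) = N := by rw [hm]; exact Nat.div_add_mod N (d+1)
      have h2 : N % (d+1) < d+1 := Nat.mod_lt N hdk
      omega
    have hcast : (((m+1-k : ℕ)):ℝ) = (m:ℝ)+1-(k:ℝ) := natCast_sub_eq (by omega)
    have hmlb : (N:ℝ)/((d:ℝ)+1) - k ≤ (m:ℝ)+1-(k:ℝ) := by
      have hnat : N < (d+1)*(m+1) := by rw [Nat.mul_succ]; exact hdm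
      have : (N:ℝ) < ((d:ℝ)+1)*((m:ℝ)+1) := by exact_mod_cast hnat
      rw [div_sub' hdpos.ne', div_le_iff₀ hdpos]
      nlinarith
    have hbase_nonneg : (0:ℝ) ≤ (1:ℝ)/((d:ℝ)+1) - (k:ℝ)/(N:ℝ) := by
      rw [sub_nonneg, div_le_div_iff₀ hNpos hdpos]
      have : (k:ℝ)*((d:ℝ)+1) ≤ (N:ℝ) := by
        exact_mod_cast (by nlinarith : k*(d+1) ≤ N)
      linarith
    have hbase : (1:ℝ)/((d:ℝ)+1) - (k:ℝ)/(N:ℝ) ≤ (((m+1-k : ℕ)):ℝ)/(N:ℝ) := by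
      rw [hcast]
      have heq : (1:ℝ)/((d:ℝ)+1) - (k:ℝ)/(N:ℝ) = ((N:ℝ)/((d:ℝ)+1) - (k:ℝ))/(N:ℝ) := by
        field_simp
      rw [heq]
      gcongr
    calc ((1:ℝ)/((d:ℝ)+1) - (k:ℝ)/(N:ℝ))^k ≤ ((((m+1-k : ℕ)):ℝ)/(N:ℝ))^k :=
          pow_le_pow_left₀ hbase_nonneg hbase k
      _ = (((m+1-k : ℕ)):ℝ)^k/(N:ℝ)^k := div_pow _ _ _
      _ ≤ _ := ratio_lower (by omega) hNk
  · -- f ≤ upper eventually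
    filter_upwards [eventually_ge_atTop k] with N hN
    exact ratio_upper (by omega) hN

lemma main_tendsto {k : ℕ} (hk : 2 ≤ k) :
    Tendsto (fun N : ℕ => ∑' d : ℕ,
      ((μ (d+1):ℤ):ℝ) * (((N/(d+1)).choose k :ℕ):ℝ) / ((N.choose k :ℕ):ℝ))
      atTop (𝓝 ((zetaSum k)⁻¹)) := by
  rw [← mu_tsum_eq hk]
  apply tendsto_tsum_of_dominated_convergence
    (bound := fun d : ℕ => (2:ℝ)^k/((d:ℝ)+1)^k)
  · -- summable bound
    apply ((summable_zeta1 hk).mul_left ((2:ℝ)^k)).congr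
    intro d
    rw [mul_one_div]
  · -- pointwise convergence
    intro d
    have h1 := (ratio_tendsto hk d).const_mul ((μ (d+1):ℤ):ℝ)
    have heq : ((μ (d+1):ℤ):ℝ) * ((1:ℝ)/((d:ℝ)+1))^k = ((μ (d+1):ℤ):ℝ)/((d:ℝ)+1)^k := by
      rw [div_pow, one_pow, mul_one_div]
    rw [heq] at h1
    apply h1.congr
    intro N
    rw [mul_div_assoc]
  · -- bound
    filter_upwards [eventually_ge_atTop (2*k)] with N hN
    intro d
    have hNk : k ≤ N := by omega
    have hcpos : (0:ℝ) < ((N.choose k :ℕ):ℝ) := by exact_mod_cast Nat.choose_pos hNk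
    have hratio_nonneg : (0:ℝ) ≤ (((N/(d+1)).choose k :ℕ):ℝ)/((N.choose k :ℕ):ℝ) := by
      positivity
    have hmu : |((μ (d+1):ℤ):ℝ)| ≤ 1 := by
      have := ArithmeticFunction.abs_moebius_le_one (n := d+1)
      exact_mod_cast this
    rw [Real.norm_eq_abs, mul_div_assoc, abs_mul,
      abs_of_nonneg hratio_nonneg]
    calc |((μ (d+1):ℤ):ℝ)| * ((((N/(d+1)).choose k :ℕ):ℝ)/((N.choose k :ℕ):ℝ))
        ≤ 1 * ((((N/(d+1)).choose k :ℕ):ℝ)/((N.choose k :ℕ):ℝ)) := by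
          gcongr
      _ = (((N/(d+1)).choose k :ℕ):ℝ)/((N.choose k :ℕ):ℝ) := one_mul _
      _ ≤ ((N:ℝ)/((d:ℝ)+1))^k / ((N:ℝ)+1-(k:ℝ))^k := ratio_upper (by omega) hNk
      _ ≤ (2:ℝ)^k/((d:ℝ)+1)^k := by
          have hApos : (0:ℝ) < (N:ℝ)+1-(k:ℝ) := by
            have : (k:ℝ) ≤ (N:ℝ) := by exact_mod_cast hNk
            linarith
          have hdpos : (0:ℝ) < (d:ℝ)+1 := by positivity
          have hkey : (N:ℝ)/((d:ℝ)+1) ≤ 2 * ((N:ℝ)+1-(k:ℝ)) / ((d:ℝ)+1) := by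
            gcongr
            have h2k : (2*k:ℝ) ≤ (N:ℝ) := by exact_mod_cast hN
            linarith
          calc ((N:ℝ)/((d:ℝ)+1))^k / ((N:ℝ)+1-(k:ℝ))^k
              ≤ (2 * ((N:ℝ)+1-(k:ℝ)) / ((d:ℝ)+1))^k / ((N:ℝ)+1-(k:ℝ))^k := by
                gcongr
            _ = (2:ℝ)^k/((d:ℝ)+1)^k := by
                rw [div_pow, mul_pow]
                field_simp

theorem zero_error_capacity_unbounded (k : ℕ) (hk : 2 ≤ k) (M : ℕ → ℕ)
    (hM : ∀ N, IsGreatest {m : ℕ | ∃ S : Finset (Fin k → ℕ),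
      IsZeroErrorCode N k S ∧ S.card = m} (M N)) :
    Tendsto (fun N : ℕ => (M N : ℝ) / (N.choose k : ℝ)) atTop (nhds (zetaSum k)⁻¹) ∧
      ∀ N, M N = (CoprimeCode N k).card := by
  have hk1 : 1 ≤ k := by omega
  have hMC : ∀ N, M N = (CoprimeCode N k).card := M_eq_coprime_card hk1 M hM
  refine ⟨?_, hMC⟩
  apply (main_tendsto hk).congr'
  filter_upwards [eventually_ge_atTop k] with N hN
  have hzreal : ((CoprimeCode N k).card : ℝ)
      = ∑ d ∈ Finset.Icc 1 N, ((μ d : ℤ):ℝ) * (((N/d).choose k :ℕ):ℝ) := by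
    exact_mod_cast coprimeCode_card N k hk1
  have hts : (∑' d : ℕ, ((μ (d+1):ℤ):ℝ) * (((N/(d+1)).choose k :ℕ):ℝ) / ((N.choose k :ℕ):ℝ))
      = (∑ d ∈ Finset.range N,
          ((μ (d+1):ℤ):ℝ) * (((N/(d+1)).choose k :ℕ):ℝ)) / ((N.choose k :ℕ):ℝ) := by
    rw [tsum_eq_sum (s := Finset.range N) ?_, Finset.sum_div]
    intro d hd
    have hdN : N ≤ d := by simpa using hd
    have h0 : N/(d+1) = 0 := Nat.div_eq_of_lt (by omega)
    rw [h0, Nat.choose_eq_zero_of_lt (by omega : (0:ℕ) < k)]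
    norm_num
  have hsum : ∑ d ∈ Finset.Icc 1 N, ((μ d:ℤ):ℝ) * (((N/d).choose k :ℕ):ℝ)
      = ∑ d ∈ Finset.range N, ((μ (d+1):ℤ):ℝ) * (((N/(d+1)).choose k :ℕ):ℝ) := by
    rw [← Finset.Ico_add_one_right_eq_Icc, Finset.sum_Ico_eq_sum_range]
    exact Finset.sum_congr (by norm_num) fun d _ => by rw [Nat.add_comm 1 d]
  calc (∑' d : ℕ, ((μ (d+1):ℤ):ℝ) * (((N/(d+1)).choose k :ℕ):ℝ) / ((N.choose k :ℕ):ℝ))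
      = (∑ d ∈ Finset.range N,
          ((μ (d+1):ℤ):ℝ) * (((N/(d+1)).choose k :ℕ):ℝ)) / ((N.choose k :ℕ):ℝ) := hts
    _ = (∑ d ∈ Finset.Icc 1 N,
          ((μ d:ℤ):ℝ) * (((N/d).choose k :ℕ):ℝ)) / ((N.choose k :ℕ):ℝ) := by rw [hsum]
    _ = ((CoprimeCode N k).card : ℝ) / ((N.choose k :ℕ):ℝ) := by rw [hzreal]
    _ = ((M N : ℕ) : ℝ) / ((N.choose k :ℕ):ℝ) := by rw [hMC N]
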